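/- Let (M, dist) be a metric space and let Y = y_1, …, y_{k+1} be a curve with k + 1 vertices such that y_i ≠ y_{i+1} for every 1 ≤ i ≤ k. Let d* = min_{1 ≤ i ≤ k} dist(y_i, y_{i+1}), let i be an index attaining this minimum, and let X_k be the curve of complexity k obtained from Y by deleting the vertex y_i. Then d_dF(Y, X_k) ≤ d*, and every curve O with at most k vertices satisfies d_dF(Y, O) ≥ d*/2; consequently d_dF(Y, X_k) ≤ 2 · d_dF(Y, O) for every curve O of complexity k, i.e., X_k is a 2-approximate k-simplification of Y. -/

import Mathlib

/-- One step of a traversal: each index advances by `0` or `1`,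
and at least one of the two indices advances. -/
def FrechetStep (a b : ℕ × ℕ) : Prop :=
  (b.1 = a.1 ∨ b.1 = a.1 + 1) ∧ (b.2 = a.2 ∨ b.2 = a.2 + 1) ∧ a.1 + a.2 < b.1 + b.2

/-- `T` is a traversal of two curves with `m` resp. `k` vertices.  Indices are
`0`-based: the vertices of the first curve are indexed `0, …, m-1` and those of
the second curve `0, …, k-1`. -/
def IsTraversal (m k : ℕ) (T : List (ℕ × ℕ)) : Prop :=
  T ≠ [] ∧ T.head? = some (0, 0) ∧ T.getLast? = some (m - 1, k - 1) ∧
    T.Chain' FrechetStep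

/-- The cost of a traversal `T` of the curves `p` and `q`: the maximum of the
pairwise distances of points paired by `T`. -/
noncomputable def travCost {M : Type*} [MetricSpace M] (p q : ℕ → M)
    (T : List (ℕ × ℕ)) : ℝ :=
  (T.map fun ij => dist (p ij.1) (q ij.2)).foldr max 0

/-- The discrete Fréchet distance between the curve with the `m` vertices
`p 0, …, p (m-1)` and the curve with the `k` vertices `q 0, …, q (k-1)`:
the minimum cost of a traversal of the two curves. -/
noncomputable def discreteFrechet {M : Type*} [MetricSpace M]
    (m : ℕ) (p : ℕ → M) (k : ℕ) (q : ℕ → M) : ℝ :=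
  sInf (travCost p q '' {T | IsTraversal m k T})

private lemma foldr_max_nonneg (l : List ℝ) : 0 ≤ l.foldr max 0 := by
  induction l with
  | nil => simp
  | cons a l ih => exact le_trans ih (le_max_right _ _)

private lemma le_foldr_max {l : List ℝ} {a : ℝ} (h : a ∈ l) : a ≤ l.foldr max 0 := by
  induction l with
  | nil => simp at h
  | cons b l ih =>
    rcases List.mem_cons.1 h with h | h
    · subst h; exact le_max_left _ _
    · exact le_trans (ih h) (le_max_right _ _)

private lemma foldr_max_le {l : List ℝ} {c : ℝ} (hc : 0 ≤ c) (h : ∀ a ∈ l, a ≤ c) :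
    l.foldr max 0 ≤ c := by
  induction l with
  | nil => simpa
  | cons b l ih => exact max_le (h b (by simp)) (ih fun a ha => h a (by simp [ha]))

private lemma travCost_nonneg {M : Type*} [MetricSpace M] (p q : ℕ → M)
    (T : List (ℕ × ℕ)) : 0 ≤ travCost p q T := foldr_max_nonneg _

private lemma dist_le_travCost {M : Type*} [MetricSpace M] (p q : ℕ → M)
    {T : List (ℕ × ℕ)} {ij : ℕ × ℕ} (h : ij ∈ T) :
    dist (p ij.1) (q ij.2) ≤ travCost p q T :=
  le_foldr_max (List.mem_map_of_mem h)

private lemma travCost_le {M : Type*} [MetricSpace M] (p q : ℕ → M) {T : List (ℕ × ℕ)}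
    {c : ℝ} (hc : 0 ≤ c) (h : ∀ ij ∈ T, dist (p ij.1) (q ij.2) ≤ c) :
    travCost p q T ≤ c := by
  apply foldr_max_le hc
  intro a ha
  obtain ⟨ij, hij, rfl⟩ := List.mem_map.1 ha
  exact h ij hij

private lemma frechet_bdd {M : Type*} [MetricSpace M] (m k : ℕ) (p q : ℕ → M) :
    BddBelow (travCost p q '' {T | IsTraversal m k T}) := by
  refine ⟨0, ?_⟩
  rintro c ⟨T, -, rfl⟩
  exact travCost_nonneg p q T

private lemma mem_le_last : ∀ (T : List (ℕ × ℕ)), T.Chain' FrechetStep → ∀ x b : ℕ × ℕ,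
    x ∈ T → T.getLast? = some b → x.1 ≤ b.1 ∧ x.2 ≤ b.2
  | [], _, x, b, hx, _ => by simp at hx
  | [a], _, x, b, hx, hb => by
      simp at hx hb
      subst hx; subst hb; exact ⟨le_rfl, le_rfl⟩
  | a :: y :: rest, h, x, b, hx, hb => by
      have h1 : FrechetStep a y := (List.isChain_cons_cons.1 h).1
      have h2 := (List.isChain_cons_cons.1 h).2
      have hb' : (y :: rest).getLast? = some b := by
        rwa [List.getLast?_cons_cons] at hb
      rcases List.mem_cons.1 hx with rfl | hx'
      · have hy := mem_le_last (y :: rest) h2 y b (by simp) hb'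
        obtain ⟨ha1, ha2, _⟩ := h1
        constructor <;> omega
      · exact mem_le_last (y :: rest) h2 x b hx' hb'

private lemma exists_flat : ∀ (T : List (ℕ × ℕ)), T.Chain' FrechetStep → ∀ x b : ℕ × ℕ,
    T.head? = some x → T.getLast? = some b → b.2 + x.1 < b.1 + x.2 →
    ∃ i j, (i, j) ∈ T ∧ (i + 1, j) ∈ T
  | [], _, x, b, hh, _, _ => by simp at hh
  | [a], _, x, b, hh, hb, hlt => by
      simp at hh hb
      subst hh; subst hb; omega
  | a :: y :: rest, h, x, b, hh, hb, hlt => by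
      have h1 : FrechetStep a y := (List.isChain_cons_cons.1 h).1
      have h2 := (List.isChain_cons_cons.1 h).2
      simp only [List.head?_cons, Option.some.injEq] at hh
      subst hh
      have hb' : (y :: rest).getLast? = some b := by
        rwa [List.getLast?_cons_cons] at hb
      obtain ⟨hy1, hy2, hy3⟩ := h1
      rcases hy1 with hy1 | hy1 <;> rcases hy2 with hy2 | hy2
      · omega
      · obtain ⟨i, j, m1, m2⟩ := exists_flat (y :: rest) h2 y b (by simp) hb' (by omega)
        exact ⟨i, j, List.mem_cons_of_mem _ m1, List.mem_cons_of_mem _ m2⟩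
      · refine ⟨a.1, a.2, by simp, ?_⟩
        have hy : y = (a.1 + 1, a.2) := by
          apply Prod.ext <;> simp [hy1, hy2]
        rw [hy] at *
        simp
      · obtain ⟨i, j, m1, m2⟩ := exists_flat (y :: rest) h2 y b (by simp) hb' (by omega)
        exact ⟨i, j, List.mem_cons_of_mem _ m1, List.mem_cons_of_mem _ m2⟩

/-- **the `init` routine produces a `2`-approximate
`k`-simplification.** Let `Y` be a curve with `k + 1` vertices
`Y 0, …, Y k`, no two consecutive vertices equal.  Let `i₀` be an index
attaining the minimum distance `d* = dist (Y i₀) (Y (i₀ + 1))` between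
consecutive vertices, and let `X_k` be the curve of complexity `k` obtained by
deleting the vertex `Y i₀`.  Then `d_dF(Y, X_k) ≤ d*`, every curve `O` with at
most `k` vertices satisfies `d_dF(Y, O) ≥ d*/2`, and consequently
`d_dF(Y, X_k) ≤ 2 · d_dF(Y, O)` for every curve `O` of complexity `k`. -/
theorem init_two_approximate_simplification {M : Type*} [MetricSpace M]
    (k : ℕ) (hk : 1 ≤ k) (Y : ℕ → M)
    (hne : ∀ i < k, Y i ≠ Y (i + 1))
    (i₀ : ℕ) (hi₀ : i₀ < k)
    (hmin : ∀ i < k, dist (Y i₀) (Y (i₀ + 1)) ≤ dist (Y i) (Y (i + 1))) :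
    discreteFrechet (k + 1) Y k (fun j => if j < i₀ then Y j else Y (j + 1)) ≤
        dist (Y i₀) (Y (i₀ + 1)) ∧
    (∀ (kO : ℕ), 1 ≤ kO → kO ≤ k → ∀ O : ℕ → M,
        dist (Y i₀) (Y (i₀ + 1)) / 2 ≤ discreteFrechet (k + 1) Y kO O) ∧
    (∀ O : ℕ → M,
        discreteFrechet (k + 1) Y k (fun j => if j < i₀ then Y j else Y (j + 1)) ≤
          2 * discreteFrechet (k + 1) Y k O) := by
  set d := dist (Y i₀) (Y (i₀ + 1)) with hd
  have hd0 : 0 ≤ d := dist_nonneg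
  set X : ℕ → M := fun j => if j < i₀ then Y j else Y (j + 1) with hX
  -- Part 1: upper bound via the explicit traversal
  have hub : discreteFrechet (k + 1) Y k X ≤ d := by
    set T₁ : List (ℕ × ℕ) :=
      (List.range (k + 1)).map (fun j => (j, if j ≤ i₀ then j else j - 1)) with hT₁
    have htrav : IsTraversal (k + 1) k T₁ := by
      refine ⟨by simp [hT₁], ?_, ?_, ?_⟩
      · rw [hT₁, List.head?_map, List.range_succ_eq_map]
        simp
      · rw [hT₁, List.range_succ, List.map_append]
        simp only [List.map_cons, List.map_nil, List.getLast?_concat, Option.some.injEq]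
        rw [if_neg (by omega)]
        simp
      · rw [hT₁]; unfold List.Chain'; rw [List.isChain_map, List.isChain_range_succ]
        intro m hm
        simp only [FrechetStep]
        split_ifs <;> simp <;> omega
    have hcost : travCost Y X T₁ ≤ d := by
      apply travCost_le _ _ hd0
      intro ij hij
      rw [hT₁] at hij
      obtain ⟨j, hj, rfl⟩ := List.mem_map.1 hij
      rw [List.mem_range] at hj
      dsimp only
      by_cases h1 : j < i₀
      · rw [if_pos (le_of_lt h1), hX]
        simp [h1, hd0]
      · by_cases h2 : j = i₀
        · subst h2
          rw [if_pos le_rfl, hX]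
          simp [hd]
        · have hj1 : i₀ < j := by omega
          rw [if_neg (by omega), hX]
          have hni : ¬ (j - 1 < i₀) := by omega
          simp only [hni, if_false]
          have hjj : j - 1 + 1 = j := by omega
          rw [hjj]
          simpa using hd0
    exact csInf_le_of_le (frechet_bdd _ _ _ _) ⟨T₁, htrav, rfl⟩ hcost
  -- Part 2: lower bound
  have hlb : ∀ kO, 1 ≤ kO → kO ≤ k → ∀ O : ℕ → M,
      d / 2 ≤ discreteFrechet (k + 1) Y kO O := by
    intro kO h1 h2 O
    set T₀ : List (ℕ × ℕ) :=
      (List.range (k + kO)).map (fun j => if j ≤ k then (j, 0) else (k, j - k)) with hT₀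
    have htrav₀ : IsTraversal (k + 1) kO T₀ := by
      refine ⟨by simp [hT₀]; omega, ?_, ?_, ?_⟩
      · obtain ⟨n, hn⟩ : ∃ n, k + kO = n + 1 := ⟨k + kO - 1, by omega⟩
        rw [hT₀, List.head?_map, hn, List.range_succ_eq_map]
        simp
      · obtain ⟨n, hn⟩ : ∃ n, k + kO = n + 1 := ⟨k + kO - 1, by omega⟩
        rw [hT₀, hn, List.range_succ, List.map_append]
        simp only [List.map_cons, List.map_nil, List.getLast?_concat, Option.some.injEq]
        split_ifs with h3
        · have hkO : kO = 1 := by omega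
          have hnk : n = k := by omega
          subst hkO; subst hnk; simp
        · have : n - k = kO - 1 := by omega
          rw [this]
          simp
      · obtain ⟨n, hn⟩ : ∃ n, k + kO = n + 1 := ⟨k + kO - 1, by omega⟩
        rw [hT₀, hn]; unfold List.Chain'; rw [List.isChain_map, List.isChain_range_succ]
        intro m hm
        split_ifs <;> simp [FrechetStep] <;> omega
    refine le_csInf ⟨travCost Y O T₀, ⟨T₀, htrav₀, rfl⟩⟩ ?_
    rintro c ⟨T, hT, rfl⟩
    obtain ⟨hne', hh, hl, hc⟩ := hT
    obtain ⟨i, j, m1, m2⟩ := exists_flat T hc (0, 0) (k + 1 - 1, kO - 1) hh hl (by simp; omega)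
    have hik : i + 1 ≤ k := by
      have := (mem_le_last T hc (i + 1, j) _ m2 hl).1
      simpa using this
    have h3 : d ≤ dist (Y i) (Y (i + 1)) := hmin i (by omega)
    have h4 := dist_le_travCost Y O m1
    have h5 := dist_le_travCost Y O m2
    simp only at h4 h5
    have htri := dist_triangle (Y i) (O j) (Y (i + 1))
    have hcomm : dist (O j) (Y (i + 1)) = dist (Y (i + 1)) (O j) := dist_comm _ _
    linarith
  refine ⟨hub, hlb, fun O => ?_⟩
  have h6 := hlb k hk le_rfl O
  linarith
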